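/- Let Γ be a group of affine transformations of ℝ³ of the form x ↦ A x + b with linear part A ∈ O(2,1). Suppose Γ acts freely on ℝ³ (every element other than the identity has no fixed point) and Γ contains no nontrivial translation. Then every element of Γ has linear part in SO(2,1), i.e., every linear part has determinant 1. (Hence every Margulis spacetime is orientable.) -/

import Mathlib

open Matrix


/-- The Minkowski bilinear form on ℝ³: ⟨x,y⟩ = x₁y₁ + x₂y₂ − x₃y₃. -/
def minkowski (x y : Fin 3 → ℝ) : ℝ := x 0 * y 0 + x 1 * y 1 - x 2 * y 2

def J3 : Matrix (Fin 3) (Fin 3) ℝ := !![1,0,0;0,1,0;0,0,-1]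

lemma J3_mul_J3 : J3 * J3 = 1 := by
  simp [J3, Matrix.mul_fin_three, Matrix.one_fin_three]

lemma J3_transpose : J3ᵀ = J3 := by
  ext i j; fin_cases i <;> fin_cases j <;> rfl

lemma trace_adjugate3 (M : Matrix (Fin 3) (Fin 3) ℝ) :
    (adjugate M).trace = ((trace M)^2 - trace (M*M))/2 := by
  simp [Matrix.adjugate_fin_three, Matrix.trace_fin_three, Matrix.mul_apply, Fin.sum_univ_three]
  ring

lemma det_sub_one3 (M : Matrix (Fin 3) (Fin 3) ℝ) :
    (M - 1).det = M.det - (adjugate M).trace + trace M - 1 := by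
  simp [Matrix.det_fin_three, Matrix.adjugate_fin_three, Matrix.trace_fin_three,
    Matrix.one_apply, Matrix.sub_apply]
  ring

set_option maxHeartbeats 1000000 in
lemma ch3 (M : Matrix (Fin 3) (Fin 3) ℝ) :
    M*M*M - trace M • (M*M) + (adjugate M).trace • M - M.det • 1 = 0 := by
  ext i j
  fin_cases i <;> fin_cases j <;>
    simp [Matrix.mul_apply, Fin.sum_univ_three, Matrix.adjugate_fin_three,
      Matrix.trace_fin_three, Matrix.det_fin_three, Matrix.one_apply,
      Matrix.smul_apply, Matrix.sub_apply, Matrix.add_apply, smul_eq_mul] <;> ring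

lemma key3 (M : Matrix (Fin 3) (Fin 3) ℝ)
    (hM : Mᵀ * J3 * M = J3) (hd : M.det = -1) (h1 : (M - 1).det = 0) :
    M * M = 1 := by
  have hJ2 : J3 * J3 = 1 := J3_mul_J3
  set X := J3 * Mᵀ * J3 with hX
  have hXM : X * M = 1 := by
    calc X * M = J3 * (Mᵀ * J3 * M) := by rw [hX]; noncomm_ring
    _ = 1 := by rw [hM, hJ2]
  have hMX : M * X = 1 := mul_eq_one_comm.mp hXM
  have hadj : adjugate M = -X := by
    calc adjugate M = adjugate M * (M * X) := by rw [hMX, mul_one]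
    _ = (adjugate M * M) * X := (mul_assoc (adjugate M) M X).symm
    _ = (M.det • (1 : Matrix (Fin 3) (Fin 3) ℝ)) * X := by rw [adjugate_mul]
    _ = -X := by rw [hd]; simp
  have htX : trace X = trace M := by
    calc trace X = trace (J3 * Mᵀ * J3) := by rw [hX]
    _ = trace (J3 * J3 * Mᵀ) := by rw [trace_mul_cycle]
    _ = trace Mᵀ := by rw [hJ2, one_mul]
    _ = trace M := trace_transpose M
  have ht : trace M = 1 := by
    have h2 := det_sub_one3 M
    rw [h1, hd, hadj, trace_neg, htX] at h2
    linarith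
  have hs : (adjugate M).trace = -1 := by rw [hadj, trace_neg, htX, ht]
  have hCH : M*M*M - (M*M) - M + 1 = 0 := by
    have h := ch3 M
    rw [ht, hs, hd] at h
    simp at h
    rwa [← sub_eq_add_neg] at h
  set C := M * M - 1 with hC
  have hMC : M * C = C := by
    have e1 : M * C - C = M*M*M - (M*M) - M + 1 := by rw [hC]; noncomm_ring
    rw [← sub_eq_zero, e1, hCH]
  have hCM : C * M = C := by
    have e1 : C * M - C = M*M*M - (M*M) - M + 1 := by rw [hC]; noncomm_ring
    rw [← sub_eq_zero, e1, hCH]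
  have hXC : X * C = C := by
    calc X * C = X * (M * C) := by rw [hMC]
    _ = (X * M) * C := (mul_assoc X M C).symm
    _ = C := by rw [hXM, one_mul]
  have hXXC : (X * X) * C = C := by
    calc (X * X) * C = X * (X * C) := mul_assoc X X C
    _ = C := by rw [hXC, hXC]
  have hXXMM : (X * X) * (M * M) = 1 := by
    calc (X * X) * (M * M) = X * ((X * M) * M) := by noncomm_ring
    _ = 1 := by rw [hXM, one_mul, hXM]
  have hCeq : C = 1 - X * X := by
    have h5 : (X * X) * C = 1 - X * X := by
      have : (X * X) * C = (X * X) * (M * M) - X * X := by rw [hC]; noncomm_ring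
      rw [this, hXXMM]
    rw [← hXXC, h5]
  have hXXeq : X * X = J3 * (Mᵀ * Mᵀ) * J3 := by
    calc X * X = J3 * Mᵀ * (J3 * J3) * Mᵀ * J3 := by rw [hX]; noncomm_ring
    _ = J3 * (Mᵀ * Mᵀ) * J3 := by rw [hJ2]; noncomm_ring
  have hCtr : Cᵀ = Mᵀ * Mᵀ - 1 := by
    rw [hC, transpose_sub, transpose_mul, transpose_one]
  have hCt2 : J3 * Cᵀ * J3 = -C := by
    calc J3 * Cᵀ * J3 = J3 * (Mᵀ * Mᵀ) * J3 - J3 * J3 := by rw [hCtr]; noncomm_ring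
    _ = X * X - 1 := by rw [hXXeq, hJ2]
    _ = -C := by rw [hCeq]; noncomm_ring
  set S := C * J3 with hS
  have hSt : Sᵀ = -S := by
    calc Sᵀ = J3ᵀ * Cᵀ := by rw [hS, transpose_mul]
    _ = J3 * Cᵀ * (J3 * J3) := by rw [J3_transpose, hJ2, mul_one]
    _ = (J3 * Cᵀ * J3) * J3 := by noncomm_ring
    _ = -S := by rw [hCt2, hS]; noncomm_ring
  have hCC : C * C = 0 := by
    calc C * C = M * (M * C) - C := by rw [hC]; noncomm_ring
    _ = 0 := by rw [hMC, hMC]; exact sub_self C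
  have hSJS : S * J3 * S = 0 := by
    calc S * J3 * S = C * (J3 * J3) * (C * J3) := by rw [hS]; noncomm_ring
    _ = (C * C) * J3 := by rw [hJ2]; noncomm_ring
    _ = 0 := by rw [hCC, zero_mul]
  -- now extract entries
  have hanti : ∀ i j, S j i = -(S i j) := by
    intro i j
    have := congrFun (congrFun hSt i) j
    simpa [Matrix.transpose_apply, Matrix.neg_apply] using this
  have hdiag : ∀ i, S i i = 0 := by
    intro i; have := hanti i i; linarith
  have hent : ∀ i j, (S * J3 * S) i j = 0 := by
    intro i j; rw [hSJS]; rfl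
  have e22 := hent 2 2
  have e00 := hent 0 0
  simp [Matrix.mul_apply, Fin.sum_univ_three, J3, hdiag 0, hdiag 1, hdiag 2,
    hanti 0 2, hanti 1 2, hanti 0 1] at e22 e00
  have hb : S 0 2 = 0 := by nlinarith [sq_nonneg (S 0 2), sq_nonneg (S 1 2), e22]
  have hc : S 1 2 = 0 := by nlinarith [sq_nonneg (S 0 2), sq_nonneg (S 1 2), e22]
  have ha : S 0 1 = 0 := by nlinarith [sq_nonneg (S 0 1), e00, hb]
  have h10 : S 1 0 = 0 := by rw [hanti 0 1, ha, neg_zero]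
  have h20 : S 2 0 = 0 := by rw [hanti 0 2, hb, neg_zero]
  have h21 : S 2 1 = 0 := by rw [hanti 1 2, hc, neg_zero]
  have h00 := hdiag 0
  have h11 := hdiag 1
  have h22 := hdiag 2
  have hS0 : S = 0 := by
    ext i j
    simp only [Matrix.zero_apply]
    fin_cases i <;> fin_cases j <;> assumption
  have hC0 : C = 0 := by
    have h6 : C = S * J3 := by rw [hS, mul_assoc, hJ2, mul_one]
    rw [h6, hS0, zero_mul]
  have h7 := hC0
  rw [hC] at h7
  exact sub_eq_zero.mp h7

/-- If a group Γ of affine transformations of ℝ³ with linear parts in O(2,1)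
acts freely and contains no nontrivial translation, then every linear part
has determinant 1, i.e. lies in SO(2,1). -/
theorem margulis_spacetime_orientable
    (Γ : Subgroup ((Fin 3 → ℝ) ≃ᵃ[ℝ] (Fin 3 → ℝ)))
    (hO : ∀ γ ∈ Γ, ∀ x y : Fin 3 → ℝ,
      minkowski (γ.linear x) (γ.linear y) = minkowski x y)
    (hfree : ∀ γ ∈ Γ, γ ≠ 1 → ∀ p : Fin 3 → ℝ, γ p ≠ p)
    (htrans : ∀ γ ∈ Γ, (∀ x : Fin 3 → ℝ, γ.linear x = x) → γ = 1) :
    ∀ γ ∈ Γ, LinearMap.det (γ.linear : (Fin 3 → ℝ) →ₗ[ℝ] (Fin 3 → ℝ)) = 1 := by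
  intro γ hγ
  set A : (Fin 3 → ℝ) →ₗ[ℝ] (Fin 3 → ℝ) := (γ.linear : (Fin 3 → ℝ) →ₗ[ℝ] (Fin 3 → ℝ)) with hA
  set M := LinearMap.toMatrix' A with hMdef
  have hAx : ∀ x, γ.linear x = M *ᵥ x := by
    intro x
    rw [hMdef, ← Matrix.toLin'_apply, Matrix.toLin'_toMatrix']
    rfl
  have hdetA : LinearMap.det A = M.det := (LinearMap.det_toMatrix' A).symm
  have horthM : ∀ x y, minkowski (M *ᵥ x) (M *ᵥ y) = minkowski x y := by
    intro x y
    have h := hO γ hγ x y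
    rwa [hAx, hAx] at h
  clear_value A M
  have hM : Mᵀ * J3 * M = J3 := by
    ext i j
    have h := horthM (Pi.single i 1) (Pi.single j 1)
    simp only [minkowski, Matrix.mulVec_single, mul_one] at h
    fin_cases i <;> fin_cases j <;>
      simp [Matrix.mul_apply, Fin.sum_univ_three, J3, Pi.single_apply,
        Matrix.vecHead, Matrix.vecTail] at h ⊢ <;>
      linarith
  -- determinant is ±1
  have hdet2 : M.det * M.det = 1 := by
    have h := congrArg Matrix.det hM
    rw [Matrix.det_mul, Matrix.det_mul, Matrix.det_transpose] at h
    have hdJ : J3.det = -1 := by simp [J3, Matrix.det_fin_three]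
    rw [hdJ] at h
    nlinarith [h]
  have hcases : M.det = 1 ∨ M.det = -1 := by
    have : (M.det - 1) * (M.det + 1) = 0 := by nlinarith [hdet2]
    rcases mul_eq_zero.mp this with h | h
    · left; linarith
    · right; linarith
  rcases hcases with hdet | hdet
  · rw [hdetA, hdet]
  · exfalso
    -- γ ≠ 1
    have hdA1 : LinearMap.det A = -1 := by rw [hdetA, hdet]
    have hne : γ ≠ 1 := by
      intro h
      rw [hA, h] at hdA1
      simp only [AffineEquiv.one_def, AffineEquiv.linear_refl] at hdA1
      rw [show ((LinearEquiv.refl ℝ (Fin 3 → ℝ)) : (Fin 3 → ℝ) →ₗ[ℝ] (Fin 3 → ℝ))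
        = LinearMap.id from rfl, LinearMap.det_id] at hdA1
      norm_num at hdA1
    have hnofix : ∀ p, γ p ≠ p := hfree γ hγ hne
    have hγx : ∀ x, γ x = γ.linear x + γ 0 := by
      intro x
      have := γ.map_vadd 0 x
      simpa [vadd_eq_add] using this
    by_cases h1 : (M - 1).det = 0
    · have hMM := key3 M hM hdet h1
      have hAA : ∀ x, γ.linear (γ.linear x) = x := by
        intro x
        rw [hAx, hAx, Matrix.mulVec_mulVec, hMM, Matrix.one_mulVec]
      have hlin : ∀ x, (γ * γ).linear x = x := by
        intro x
        exact hAA x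
      have hγγ : γ * γ = 1 := htrans (γ * γ) (mul_mem hγ hγ) hlin
      have hb2 : γ (γ 0) = 0 := by
        have h := congrFun (congrArg (fun (e : (Fin 3 → ℝ) ≃ᵃ[ℝ] (Fin 3 → ℝ)) => (e : (Fin 3 → ℝ) → (Fin 3 → ℝ))) hγγ) 0
        simpa using h
      have hAb : γ.linear (γ 0) + γ 0 = 0 := by
        rw [← hγx (γ 0)]; exact hb2
      have hfix : γ ((1/2 : ℝ) • γ 0) = (1/2 : ℝ) • γ 0 := by
        rw [hγx, _root_.map_smul]
        have h8 : γ.linear (γ 0) = -(γ 0) := eq_neg_of_add_eq_zero_left hAb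
        rw [h8]
        module
      exact hnofix _ hfix
    · have hdN : (1 - M).det ≠ 0 := by
        rw [show (1 : Matrix (Fin 3) (Fin 3) ℝ) - M = -(M - 1) by rw [neg_sub], Matrix.det_neg]
        simp only [Fintype.card_fin]
        intro hcon
        apply h1
        simpa using hcon
      set N := (1 : Matrix (Fin 3) (Fin 3) ℝ) - M with hN
      set p := N⁻¹ *ᵥ γ 0 with hp
      have hNp : N *ᵥ p = γ 0 := by
        rw [hp, Matrix.mulVec_mulVec, Matrix.mul_nonsing_inv _ (isUnit_iff_ne_zero.mpr hdN), Matrix.one_mulVec]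
      have hfix : γ p = p := by
        rw [hγx, hAx]
        have h9 : p - M *ᵥ p = γ 0 := by
          rw [← hNp, hN, Matrix.sub_mulVec, Matrix.one_mulVec]
        have : M *ᵥ p + γ 0 = M *ᵥ p + (p - M *ᵥ p) := by rw [h9]
        rw [this]
        abel
      exact hnofix p hfix
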